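/- Suppose a, b, c are positive and all odd. Then every integer N with N ≡ -abc (mod 8(abc)²) is not represented over the rationals by the form ax² + by² + cz². -/

import Mathlib

open NumberTheorySymbols


private lemma key8 : ∀ A ∈ ({1,3,5,7} : Finset (ZMod 8)), ∀ B ∈ ({1,3,5,7} : Finset (ZMod 8)),
    ∀ C ∈ ({1,3,5,7} : Finset (ZMod 8)),
    A - B ∈ ({0,4} : Finset (ZMod 8)) → A - C ∈ ({0,4} : Finset (ZMod 8)) →
    ∀ u ∈ ({0,1,4} : Finset (ZMod 8)), ∀ v ∈ ({0,1,4} : Finset (ZMod 8)),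
    ∀ w ∈ ({0,1,4} : Finset (ZMod 8)), ∀ t ∈ ({0,1,4} : Finset (ZMod 8)),
    (u = 1 ∨ v = 1 ∨ w = 1 ∨ t = 1) →
    A * u + B * v + C * w + A * B * C * t ≠ 0 := by decide

private lemma sq_mem8 (T : ZMod 8) : T ^ 2 ∈ ({0,1,4} : Finset (ZMod 8)) := by
  revert T; decide

private lemma odd_cast8 {a : ℤ} (h : Odd a) : ((a : ZMod 8)) ∈ ({1,3,5,7} : Finset (ZMod 8)) := by
  have h2 : a % 2 = 1 := Int.odd_iff.mp h
  have h8 : a % 8 = 1 ∨ a % 8 = 3 ∨ a % 8 = 5 ∨ a % 8 = 7 := by omega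
  have hc : ((a : ZMod 8)) = ((a % 8 : ℤ) : ZMod 8) := (ZMod.intCast_mod a 8).symm
  rw [hc]
  rcases h8 with h | h | h | h <;> rw [h] <;> decide

private lemma odd_sq8 {X : ℤ} (h : Odd X) : ((X : ZMod 8)) ^ 2 = 1 := by
  obtain ⟨k, hk⟩ := h
  have h2 : Even (k * (k + 1)) := Int.even_mul_succ_self k
  obtain ⟨j, hj⟩ := h2
  have hdvd : (8 : ℤ) ∣ X ^ 2 - 1 := ⟨j, by subst hk; nlinarith⟩
  have h0 : ((X ^ 2 - 1 : ℤ) : ZMod 8) = 0 :=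
    (ZMod.intCast_zmod_eq_zero_iff_dvd _ 8).mpr hdvd
  push_cast at h0
  linear_combination h0

private lemma diff_mem8 {a b : ℤ} (h : (4 : ℤ) ∣ a - b) :
    ((a : ZMod 8) - (b : ZMod 8)) ∈ ({0,4} : Finset (ZMod 8)) := by
  obtain ⟨k, hk⟩ := h
  have hd : ((a : ZMod 8) - (b : ZMod 8)) = 4 * (k : ZMod 8) := by
    have h0 : ((a - b : ℤ) : ZMod 8) = ((4 * k : ℤ) : ZMod 8) := by rw [hk]
    push_cast at h0
    linear_combination h0
  rw [hd]
  have h4 : ∀ K : ZMod 8, 4 * K ∈ ({0,4} : Finset (ZMod 8)) := by decide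
  exact h4 _


private lemma stepA (a b c N X Y Z W : ℤ) (p : ℕ) [hpf : Fact p.Prime]
    (hsa : Squarefree a)
    (hpa : (p : ℤ) ∣ a) (hpb : ¬ (p : ℤ) ∣ b) (hpc : ¬ (p : ℤ) ∣ c)
    (hNmod : (p : ℤ) ^ 2 ∣ N + a * b * c)
    (hE : a * X ^ 2 + b * Y ^ 2 + c * Z ^ 2 = N * W ^ 2)
    (hprim : ¬((p : ℤ) ∣ X ∧ (p : ℤ) ∣ Y ∧ (p : ℤ) ∣ Z ∧ (p : ℤ) ∣ W)) :
    IsSquare ((-(b * c) : ℤ) : ZMod p) := by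
  have castdvd : ∀ t : ℤ, (p : ℤ) ∣ t ↔ ((t : ZMod p) = 0) := fun t =>
    (ZMod.intCast_zmod_eq_zero_iff_dvd t p).symm
  have hpN : (p : ℤ) ∣ N := by
    have h1 : (p : ℤ) ∣ N + a * b * c := dvd_trans (dvd_pow_self _ two_ne_zero) hNmod
    have h2 : (p : ℤ) ∣ a * b * c := Dvd.dvd.mul_right (hpa.mul_right b) c
    simpa using dvd_sub h1 h2
  have hB : ((b : ZMod p)) ≠ 0 := fun h => hpb ((castdvd b).mpr h)
  have hC : ((c : ZMod p)) ≠ 0 := fun h => hpc ((castdvd c).mpr h)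
  have hE8 : (a : ZMod p) * (X : ZMod p) ^ 2 + (b : ZMod p) * (Y : ZMod p) ^ 2
      + (c : ZMod p) * (Z : ZMod p) ^ 2 = (N : ZMod p) * (W : ZMod p) ^ 2 := by
    exact_mod_cast congrArg (fun t : ℤ => (t : ZMod p)) hE
  have hA0 : (a : ZMod p) = 0 := (castdvd a).mp hpa
  have hN0 : (N : ZMod p) = 0 := (castdvd N).mp hpN
  rw [hA0, hN0, zero_mul, zero_mul, zero_add] at hE8
  by_cases hZ : (Z : ZMod p) = 0
  · -- then Y ≡ 0 as well
    have hY : (Y : ZMod p) = 0 := by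
      rw [hZ] at hE8
      have h0 : (b : ZMod p) * (Y : ZMod p) ^ 2 = 0 := by linear_combination hE8
      rcases mul_eq_zero.mp h0 with h | h
      · exact absurd h hB
      · exact pow_eq_zero_iff two_ne_zero |>.mp h
    have hpY : (p : ℤ) ∣ Y := (castdvd Y).mpr hY
    have hpZ : (p : ℤ) ∣ Z := (castdvd Z).mpr hZ
    obtain ⟨a₁, rfl⟩ := hpa
    obtain ⟨N₁, rfl⟩ := hpN
    obtain ⟨Y₁, rfl⟩ := hpY
    obtain ⟨Z₁, rfl⟩ := hpZ
    have hppos : (0 : ℤ) < p := by exact_mod_cast hpf.1.pos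
    have hpa1 : ¬ (p : ℤ) ∣ a₁ := by
      intro ⟨a₂, ha2⟩
      have : IsUnit (p : ℤ) := hsa (p : ℤ) ⟨a₂, by rw [ha2]; ring⟩
      rw [Int.isUnit_iff] at this
      have := hpf.1.two_le
      omega
    have hA1 : ((a₁ : ZMod p)) ≠ 0 := fun h => hpa1 ((castdvd a₁).mpr h)
    have hN1mod : (p : ℤ) ∣ N₁ + a₁ * b * c := by
      obtain ⟨k, hk⟩ := hNmod
      exact ⟨k, mul_left_cancel₀ (ne_of_gt hppos) (by linear_combination hk)⟩
    have hkey : (p : ℤ) ∣ a₁ * X ^ 2 - N₁ * W ^ 2 := by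
      refine ⟨-(b * Y₁ ^ 2 + c * Z₁ ^ 2), ?_⟩
      exact mul_left_cancel₀ (ne_of_gt hppos) (by linear_combination hE)
    have hkey' : (a₁ : ZMod p) * (X : ZMod p) ^ 2 = (N₁ : ZMod p) * (W : ZMod p) ^ 2 := by
      have h0 := (castdvd _).mp hkey
      push_cast at h0
      linear_combination h0
    have hN1c : (N₁ : ZMod p) = -((a₁ : ZMod p) * (b : ZMod p) * (c : ZMod p)) := by
      have h0 := (castdvd _).mp hN1mod
      push_cast at h0
      linear_combination h0
    have h3 : (X : ZMod p) ^ 2 = -((b : ZMod p) * (c : ZMod p)) * (W : ZMod p) ^ 2 := by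
      refine mul_left_cancel₀ hA1 ?_
      linear_combination hkey' + (W : ZMod p) ^ 2 * hN1c
    by_cases hW : (W : ZMod p) = 0
    · have hX : (X : ZMod p) = 0 := by
        rw [hW] at h3
        have h0 : (X : ZMod p) ^ 2 = 0 := by linear_combination h3
        exact pow_eq_zero_iff two_ne_zero |>.mp h0
      exact absurd ⟨(castdvd X).mpr hX, ⟨Y₁, rfl⟩, ⟨Z₁, rfl⟩, (castdvd W).mpr hW⟩ hprim
    · refine ⟨(X : ZMod p) * (W : ZMod p)⁻¹, ?_⟩
      push_cast
      field_simp
      linear_combination -h3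
  · refine ⟨(b : ZMod p) * (Y : ZMod p) * (Z : ZMod p)⁻¹, ?_⟩
    push_cast
    field_simp
    linear_combination -hE8


private lemma jacobi_eq_one (m : ℤ) (n : ℕ)
    (h : ∀ p : ℕ, (hp : p.Prime) → p ∣ n → @legendreSym p ⟨hp⟩ m = 1) :
    J(m | n) = 1 := by
  rw [jacobiSym]
  apply List.prod_eq_one
  intro x hx
  rw [List.mem_pmap] at hx
  obtain ⟨q, hq, rfl⟩ := hx
  exact h q (Nat.prime_of_mem_primeFactorsList hq) (Nat.dvd_of_mem_primeFactorsList hq)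


private lemma signs (u v s e1 e2 e3 : ℤ) (hu : u = 1 ∨ u = -1) (hv : v = 1 ∨ v = -1)
    (hs : s = 1 ∨ s = -1) (h1 : u * v = e1) (h2 : u * s = e2) (h3 : v * s = e3)
    (he : e1 * e2 * e3 = -1) : False := by
  rcases hu with rfl | rfl <;> rcases hv with rfl | rfl <;> rcases hs with rfl | rfl <;>
    rw [← h1, ← h2, ← h3] at he <;> norm_num at he

private lemma stepB (a b c : ℤ) (hapos : 0 < a) (hbpos : 0 < b) (hcpos : 0 < c)
    (hoa : Odd a) (hob : Odd b) (hoc : Odd c)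
    (hab : IsCoprime a b) (hac : IsCoprime a c) (hbc : IsCoprime b c)
    (Ja : J(-(b * c) | a.natAbs) = 1) (Jb : J(-(a * c) | b.natAbs) = 1)
    (Jc : J(-(a * b) | c.natAbs) = 1) :
    a % 4 = b % 4 ∧ a % 4 = c % 4 := by
  set A := a.natAbs with hA
  set B := b.natAbs with hB
  set C := c.natAbs with hC
  have haA : ((A : ℤ)) = a := Int.natAbs_of_nonneg hapos.le
  have hbB : ((B : ℤ)) = b := Int.natAbs_of_nonneg hbpos.le
  have hcC : ((C : ℤ)) = c := Int.natAbs_of_nonneg hcpos.le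
  have hoA : Odd A := Int.natAbs_odd.mpr hoa
  have hoB : Odd B := Int.natAbs_odd.mpr hob
  have hoC : Odd C := Int.natAbs_odd.mpr hoc
  have hA2 : A % 2 = 1 := Nat.odd_iff.mp hoA
  have hB2 : B % 2 = 1 := Nat.odd_iff.mp hoB
  have hC2 : C % 2 = 1 := Nat.odd_iff.mp hoC
  -- rewrite the numerators
  rw [show -(b * c) = -1 * ((B : ℤ) * (C : ℤ)) by rw [hbB, hcC]; ring,
    jacobiSym.mul_left, jacobiSym.mul_left, jacobiSym.at_neg_one hoA] at Ja
  rw [show -(a * c) = -1 * ((A : ℤ) * (C : ℤ)) by rw [haA, hcC]; ring,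
    jacobiSym.mul_left, jacobiSym.mul_left, jacobiSym.at_neg_one hoB] at Jb
  rw [show -(a * b) = -1 * ((A : ℤ) * (B : ℤ)) by rw [haA, hbB]; ring,
    jacobiSym.mul_left, jacobiSym.mul_left, jacobiSym.at_neg_one hoC] at Jc
  set u := J((B : ℤ) | A) with hu_def
  set v := J((C : ℤ) | A) with hv_def
  set s := J((C : ℤ) | B) with hs_def
  -- apply reciprocity to Jb and Jc
  rw [← jacobiSym.quadratic_reciprocity_if hA2 hB2] at Jb
  rw [← jacobiSym.quadratic_reciprocity_if hA2 hC2, ← jacobiSym.quadratic_reciprocity_if hB2 hC2] at Jc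
  -- u, v, s are ±1
  have gab : Int.gcd ((B : ℤ)) ((A : ℕ) : ℤ) = 1 := by
    rw [Int.gcd_natCast_natCast, Nat.gcd_comm]
    exact Int.isCoprime_iff_gcd_eq_one.mp hab
  have gac : Int.gcd ((C : ℤ)) ((A : ℕ) : ℤ) = 1 := by
    rw [Int.gcd_natCast_natCast, Nat.gcd_comm]
    exact Int.isCoprime_iff_gcd_eq_one.mp hac
  have gbc : Int.gcd ((C : ℤ)) ((B : ℕ) : ℤ) = 1 := by
    rw [Int.gcd_natCast_natCast, Nat.gcd_comm]
    exact Int.isCoprime_iff_gcd_eq_one.mp hbc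
  have hu : u = 1 ∨ u = -1 := jacobiSym.eq_one_or_neg_one gab
  have hv : v = 1 ∨ v = -1 := jacobiSym.eq_one_or_neg_one gac
  have hs : s = 1 ∨ s = -1 := jacobiSym.eq_one_or_neg_one gbc
  have haa : a % 4 = ((A % 4 : ℕ) : ℤ) := by rw [← haA]; omega
  have hbb : b % 4 = ((B % 4 : ℕ) : ℤ) := by rw [← hbB]; omega
  have hcc : c % 4 = ((C % 4 : ℕ) : ℤ) := by rw [← hcC]; omega
  have hA4 : A % 4 = 1 ∨ A % 4 = 3 := by omega
  have hB4 : B % 4 = 1 ∨ B % 4 = 3 := by omega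
  have hC4 : C % 4 = 1 ∨ C % 4 = 3 := by omega
  rcases hA4 with hA4 | hA4 <;> rcases hB4 with hB4 | hB4 <;> rcases hC4 with hC4 | hC4
  · exact ⟨by omega, by omega⟩
  · -- (1,1,3)
    rw [ZMod.χ₄_nat_one_mod_four hA4] at Ja
    rw [ZMod.χ₄_nat_one_mod_four hB4, if_neg (by omega)] at Jb
    rw [ZMod.χ₄_nat_three_mod_four hC4, if_neg (by omega), if_neg (by omega)] at Jc
    exact (signs u v s 1 1 (-1) hu hv hs
      (by linear_combination Ja) (by linear_combination Jb) (by linear_combination -Jc)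
      (by norm_num)).elim
  · -- (1,3,1)
    rw [ZMod.χ₄_nat_one_mod_four hA4] at Ja
    rw [ZMod.χ₄_nat_three_mod_four hB4, if_neg (by omega)] at Jb
    rw [ZMod.χ₄_nat_one_mod_four hC4, if_neg (by omega), if_neg (by omega)] at Jc
    exact (signs u v s 1 (-1) 1 hu hv hs
      (by linear_combination Ja) (by linear_combination -Jb) (by linear_combination Jc)
      (by norm_num)).elim
  · -- (1,3,3)
    rw [ZMod.χ₄_nat_one_mod_four hA4] at Ja
    rw [ZMod.χ₄_nat_three_mod_four hB4, if_neg (by omega)] at Jb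
    rw [ZMod.χ₄_nat_three_mod_four hC4, if_neg (by omega), if_pos ⟨hB4, hC4⟩] at Jc
    exact (signs u v s 1 (-1) 1 hu hv hs
      (by linear_combination Ja) (by linear_combination -Jb) (by linear_combination Jc)
      (by norm_num)).elim
  · -- (3,1,1)
    rw [ZMod.χ₄_nat_three_mod_four hA4] at Ja
    rw [ZMod.χ₄_nat_one_mod_four hB4, if_neg (by omega)] at Jb
    rw [ZMod.χ₄_nat_one_mod_four hC4, if_neg (by omega), if_neg (by omega)] at Jc
    exact (signs u v s (-1) 1 1 hu hv hs
      (by linear_combination -Ja) (by linear_combination Jb) (by linear_combination Jc)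
      (by norm_num)).elim
  · -- (3,1,3)
    rw [ZMod.χ₄_nat_three_mod_four hA4] at Ja
    rw [ZMod.χ₄_nat_one_mod_four hB4, if_neg (by omega)] at Jb
    rw [ZMod.χ₄_nat_three_mod_four hC4, if_pos ⟨hA4, hC4⟩, if_neg (by omega)] at Jc
    exact (signs u v s (-1) 1 1 hu hv hs
      (by linear_combination -Ja) (by linear_combination Jb) (by linear_combination Jc)
      (by norm_num)).elim
  · -- (3,3,1)
    rw [ZMod.χ₄_nat_three_mod_four hA4] at Ja
    rw [ZMod.χ₄_nat_three_mod_four hB4, if_pos ⟨hA4, hB4⟩] at Jb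
    rw [ZMod.χ₄_nat_one_mod_four hC4, if_neg (by omega), if_neg (by omega)] at Jc
    exact (signs u v s (-1) 1 1 hu hv hs
      (by linear_combination -Ja) (by linear_combination Jb) (by linear_combination Jc)
      (by norm_num)).elim
  · exact ⟨by omega, by omega⟩

theorem stmt4 (a b c : ℤ) (ha : a ≠ 0) (hb : b ≠ 0) (hc : c ≠ 0)
    (hsa : Squarefree a) (hsb : Squarefree b) (hsc : Squarefree c)
    (hab : IsCoprime a b) (hac : IsCoprime a c) (hbc : IsCoprime b c)
    (hapos : 0 < a) (hbpos : 0 < b) (hcpos : 0 < c)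
    (hoa : Odd a) (hob : Odd b) (hoc : Odd c)
    (N : ℤ) (hN : N ≡ -(a * b * c) [ZMOD 8 * (a * b * c) ^ 2]) :
    ¬ ∃ x y z : ℚ, (a : ℚ) * x ^ 2 + (b : ℚ) * y ^ 2 + (c : ℚ) * z ^ 2 = (N : ℚ) := by
  rintro ⟨x, y, z, hxyz⟩
  have hdvd : 8 * (a * b * c) ^ 2 ∣ N + a * b * c := by
    have h := hN.dvd
    rw [show -(a * b * c) - N = -(N + a * b * c) by ring] at h
    exact (dvd_neg).mp h
  -- clear denominators
  have hxd : ((x.den : ℚ)) ≠ 0 := Nat.cast_ne_zero.mpr x.den_nz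
  have hyd : ((y.den : ℚ)) ≠ 0 := Nat.cast_ne_zero.mpr y.den_nz
  have hzd : ((z.den : ℚ)) ≠ 0 := Nat.cast_ne_zero.mpr z.den_nz
  have hx : (x.num : ℚ) = x * (x.den : ℚ) := (div_eq_iff hxd).mp (Rat.num_div_den x)
  have hy : (y.num : ℚ) = y * (y.den : ℚ) := (div_eq_iff hyd).mp (Rat.num_div_den y)
  have hz : (z.num : ℚ) = z * (z.den : ℚ) := (div_eq_iff hzd).mp (Rat.num_div_den z)
  set X₀ : ℤ := x.num * (y.den : ℤ) * (z.den : ℤ) with hX₀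
  set Y₀ : ℤ := y.num * (x.den : ℤ) * (z.den : ℤ) with hY₀
  set Z₀ : ℤ := z.num * (x.den : ℤ) * (y.den : ℤ) with hZ₀
  set W₀ : ℤ := (x.den : ℤ) * (y.den : ℤ) * (z.den : ℤ) with hW₀
  have hW₀pos : 0 < W₀ := by
    have h1 : (0:ℤ) < (x.den : ℤ) := Int.natCast_pos.mpr x.pos
    have h2 : (0:ℤ) < (y.den : ℤ) := Int.natCast_pos.mpr y.pos
    have h3 : (0:ℤ) < (z.den : ℤ) := Int.natCast_pos.mpr z.pos
    positivity
  have E₀ : a * X₀ ^ 2 + b * Y₀ ^ 2 + c * Z₀ ^ 2 = N * W₀ ^ 2 := by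
    have hQ : ((a * X₀ ^ 2 + b * Y₀ ^ 2 + c * Z₀ ^ 2 : ℤ) : ℚ) = ((N * W₀ ^ 2 : ℤ) : ℚ) := by
      rw [hX₀, hY₀, hZ₀, hW₀]
      push_cast
      rw [hx, hy, hz]
      linear_combination ((x.den : ℚ) * (y.den : ℚ) * (z.den : ℚ)) ^ 2 * hxyz
    exact_mod_cast hQ
  -- normalize by the gcd
  set g : ℕ := Nat.gcd (Nat.gcd X₀.natAbs Y₀.natAbs) (Nat.gcd Z₀.natAbs W₀.natAbs) with hg
  have hg0 : g ≠ 0 := by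
    intro h0
    rw [hg] at h0
    have := Nat.eq_zero_of_gcd_eq_zero_right h0
    have := Nat.eq_zero_of_gcd_eq_zero_right this
    have := Int.natAbs_eq_zero.mp this
    omega
  have hdX : (g : ℤ) ∣ X₀ :=
    Int.natCast_dvd.mpr ((Nat.gcd_dvd_left _ _).trans (Nat.gcd_dvd_left _ _))
  have hdY : (g : ℤ) ∣ Y₀ :=
    Int.natCast_dvd.mpr ((Nat.gcd_dvd_left _ _).trans (Nat.gcd_dvd_right _ _))
  have hdZ : (g : ℤ) ∣ Z₀ :=
    Int.natCast_dvd.mpr ((Nat.gcd_dvd_right _ _).trans (Nat.gcd_dvd_left _ _))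
  have hdW : (g : ℤ) ∣ W₀ :=
    Int.natCast_dvd.mpr ((Nat.gcd_dvd_right _ _).trans (Nat.gcd_dvd_right _ _))
  obtain ⟨X, hX⟩ := hdX
  obtain ⟨Y, hY⟩ := hdY
  obtain ⟨Z, hZ⟩ := hdZ
  obtain ⟨W, hW⟩ := hdW
  have hgZ : ((g : ℤ)) ≠ 0 := Int.natCast_ne_zero.mpr hg0
  have E : a * X ^ 2 + b * Y ^ 2 + c * Z ^ 2 = N * W ^ 2 := by
    refine mul_left_cancel₀ (pow_ne_zero 2 hgZ) ?_
    rw [hX, hY, hZ, hW] at E₀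
    linear_combination E₀
  have hprim : ∀ q : ℕ, q.Prime → ¬((q:ℤ) ∣ X ∧ (q:ℤ) ∣ Y ∧ (q:ℤ) ∣ Z ∧ (q:ℤ) ∣ W) := by
    rintro q hq ⟨dx, dy, dz, dw⟩
    have hX' : g * q ∣ X₀.natAbs := by
      rw [← Int.natCast_dvd]
      push_cast
      rw [hX]
      exact mul_dvd_mul_left _ dx
    have hY' : g * q ∣ Y₀.natAbs := by
      rw [← Int.natCast_dvd]; push_cast; rw [hY]; exact mul_dvd_mul_left _ dy
    have hZ' : g * q ∣ Z₀.natAbs := by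
      rw [← Int.natCast_dvd]; push_cast; rw [hZ]; exact mul_dvd_mul_left _ dz
    have hW' : g * q ∣ W₀.natAbs := by
      rw [← Int.natCast_dvd]; push_cast; rw [hW]; exact mul_dvd_mul_left _ dw
    have hdg : g * q ∣ g := by
      rw [hg]
      exact Nat.dvd_gcd (Nat.dvd_gcd hX' hY') (Nat.dvd_gcd hZ' hW')
    have h1 := Nat.le_of_dvd (Nat.pos_of_ne_zero hg0) hdg
    have h2 : g * 2 ≤ g * q := Nat.mul_le_mul_left g hq.two_le
    omega
  -- the three Jacobi symbol conditions
  have mkJ : ∀ (a' b' c' : ℤ) (X' Y' Z' : ℤ), Squarefree a' → IsCoprime a' b' → IsCoprime a' c' →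
      (a' * b' * c' = a * b * c) →
      (a' * X' ^ 2 + b' * Y' ^ 2 + c' * Z' ^ 2 = N * W ^ 2) →
      (∀ q : ℕ, q.Prime → ¬((q:ℤ) ∣ X' ∧ (q:ℤ) ∣ Y' ∧ (q:ℤ) ∣ Z' ∧ (q:ℤ) ∣ W)) →
      J(-(b' * c') | a'.natAbs) = 1 := by
    intro a' b' c' X' Y' Z' hsa' hab' hac' hm hE' hprim'
    refine jacobi_eq_one _ _ (fun p hp hpdvd => ?_)
    haveI : Fact p.Prime := ⟨hp⟩
    have hpa : (p : ℤ) ∣ a' := Int.dvd_natAbs.mp (Int.natCast_dvd_natCast.mpr hpdvd)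
    have hpInt : Prime ((p : ℤ)) := Nat.prime_iff_prime_int.mp hp
    have hpb : ¬ (p : ℤ) ∣ b' := by
      intro hd
      have := Int.isUnit_iff.mp (hab'.isUnit_of_dvd' hpa hd)
      have := hp.two_le
      omega
    have hpc : ¬ (p : ℤ) ∣ c' := by
      intro hd
      have := Int.isUnit_iff.mp (hac'.isUnit_of_dvd' hpa hd)
      have := hp.two_le
      omega
    have hNmod : (p : ℤ) ^ 2 ∣ N + a' * b' * c' := by
      rw [hm]
      refine dvd_trans (pow_dvd_pow_of_dvd ?_ 2) (dvd_trans (dvd_mul_left _ 8) hdvd)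
      rw [← hm]
      exact (hpa.mul_right b').mul_right c'
    have hsq := stepA a' b' c' N X' Y' Z' W p hsa' hpa hpb hpc hNmod hE' (hprim' p hp)
    have hne : (((-(b' * c') : ℤ)) : ZMod p) ≠ 0 := by
      intro h0
      have hd : (p : ℤ) ∣ -(b' * c') := (ZMod.intCast_zmod_eq_zero_iff_dvd _ p).mp h0
      rcases hpInt.dvd_mul.mp (dvd_neg.mp hd) with h | h
      · exact hpb h
      · exact hpc h
    exact (legendreSym.eq_one_iff p hne).mpr hsq
  have Ja : J(-(b * c) | a.natAbs) = 1 :=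
    mkJ a b c X Y Z hsa hab hac rfl E hprim
  have Jb : J(-(a * c) | b.natAbs) = 1 :=
    mkJ b a c Y X Z hsb hab.symm hbc (by ring) (by linear_combination E)
      (fun q hq hd => hprim q hq ⟨hd.2.1, hd.1, hd.2.2.1, hd.2.2.2⟩)
  have Jc : J(-(a * b) | c.natAbs) = 1 :=
    mkJ c a b Z X Y hsc hac.symm hbc.symm (by ring) (by linear_combination E)
      (fun q hq hd => hprim q hq ⟨hd.2.1, hd.2.2.1, hd.1, hd.2.2.2⟩)
  obtain ⟨h4ab, h4ac⟩ := stepB a b c hapos hbpos hcpos hoa hob hoc hab hac hbc Ja Jb Jc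
  -- the final mod 8 contradiction
  have h8 : (8 : ℤ) ∣ N + a * b * c := dvd_trans (dvd_mul_right 8 _) hdvd
  have hN8 : ((N : ZMod 8)) = -((a : ZMod 8) * (b : ZMod 8) * (c : ZMod 8)) := by
    have h0 := (ZMod.intCast_zmod_eq_zero_iff_dvd _ 8).mpr h8
    push_cast at h0
    linear_combination h0
  have E8 : (a : ZMod 8) * (X : ZMod 8) ^ 2 + (b : ZMod 8) * (Y : ZMod 8) ^ 2
      + (c : ZMod 8) * (Z : ZMod 8) ^ 2 = (N : ZMod 8) * (W : ZMod 8) ^ 2 := by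
    exact_mod_cast congrArg (fun t : ℤ => (t : ZMod 8)) E
  have hsum : (a : ZMod 8) * (X : ZMod 8) ^ 2 + (b : ZMod 8) * (Y : ZMod 8) ^ 2
      + (c : ZMod 8) * (Z : ZMod 8) ^ 2
      + (a : ZMod 8) * (b : ZMod 8) * (c : ZMod 8) * (W : ZMod 8) ^ 2 = 0 := by
    rw [hN8] at E8
    linear_combination E8
  have hor : ¬(2:ℤ) ∣ X ∨ ¬(2:ℤ) ∣ Y ∨ ¬(2:ℤ) ∣ Z ∨ ¬(2:ℤ) ∣ W := by
    have := hprim 2 Nat.prime_two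
    push_cast at this
    tauto
  have hone : (X : ZMod 8) ^ 2 = 1 ∨ (Y : ZMod 8) ^ 2 = 1 ∨ (Z : ZMod 8) ^ 2 = 1
      ∨ (W : ZMod 8) ^ 2 = 1 := by
    rcases hor with h | h | h | h
    · exact Or.inl (odd_sq8 (Int.not_even_iff_odd.mp (fun he => h he.two_dvd)))
    · exact Or.inr (Or.inl (odd_sq8 (Int.not_even_iff_odd.mp (fun he => h he.two_dvd))))
    · exact Or.inr (Or.inr (Or.inl (odd_sq8 (Int.not_even_iff_odd.mp (fun he => h he.two_dvd)))))
    · exact Or.inr (Or.inr (Or.inr (odd_sq8 (Int.not_even_iff_odd.mp (fun he => h he.two_dvd)))))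
  exact key8 (a : ZMod 8) (odd_cast8 hoa) (b : ZMod 8) (odd_cast8 hob) (c : ZMod 8)
    (odd_cast8 hoc) (diff_mem8 (by omega)) (diff_mem8 (by omega))
    _ (sq_mem8 _) _ (sq_mem8 _) _ (sq_mem8 _) _ (sq_mem8 _) hone hsum
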